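/- If g_λ > 0 for some λ ∈ [0, ∞), then g_λ > 0 for every λ ∈ [0, ∞). -/

import Mathlib

open MeasureTheory ENNReal Real Filter Set Topology

noncomputable section

variable {Ω : Type*}

/-- Entropic utility `U_l(X) = -(1/l) * log E[exp (-l * X)]`, valued in `EReal`
(so that it takes values in `[-∞, ∞)` when `l > 0`). -/
def entU {mΩ : MeasurableSpace Ω} (P : Measure Ω) (l : ℝ) (X : Ω → ℝ) : EReal :=
  (- ENNReal.log (∫⁻ ω, ENNReal.ofReal (Real.exp (-l * X ω)) ∂P)) * ((1 / l : ℝ) : EReal)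

/-- A policy: at each time `t < m`, an `F t`-measurable, essentially bounded action in `ℝ^n`. -/
def IsPolicy {mΩ : MeasurableSpace Ω} (P : Measure Ω) (m n : ℕ) (F : ℕ → MeasurableSpace Ω)
    (a : ℕ → Ω → Fin n → ℝ) : Prop :=
  ∀ t < m, Measurable[F t] (a t) ∧ ∃ C : ℝ, ∀ᵐ ω ∂P, ∀ i, |a t ω i| ≤ C

/-- Terminal gain of a policy under proportional transaction costs:
`G(a) = Σ_{t<m} [ a_t · (H_T^{(t)} - H_t^{(t)}) - γ_t^+ · a_t^+ - γ_t^- · a_t^- ]`. -/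
def propGain (m n : ℕ) (Hmid HT : ℕ → Ω → Fin n → ℝ) (γp γm : ℕ → Ω → Fin n → ℝ)
    (a : ℕ → Ω → Fin n → ℝ) (ω : Ω) : ℝ :=
  ∑ t ∈ Finset.range m, ((∑ i, a t ω i * (HT t ω i - Hmid t ω i))
    - ∑ i, (γp t ω i * max (a t ω i) 0 + γm t ω i * max (-a t ω i) 0))

lemma ofReal_max_zero' (x : ℝ) : ENNReal.ofReal (max x 0) = ENNReal.ofReal x := by
  rcases le_total x 0 with h | h
  · rw [max_eq_right h, ENNReal.ofReal_zero, eq_comm, ENNReal.ofReal_eq_zero]; exact h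
  · rw [max_eq_left h]

lemma ofReal_integral_le {mΩ : MeasurableSpace Ω} (P : Measure Ω) {f : Ω → ℝ}
    (hf : Integrable f P) :
    ENNReal.ofReal (∫ ω, f ω ∂P) ≤ ∫⁻ ω, ENNReal.ofReal (f ω) ∂P := by
  have hmax : Integrable (fun ω => max (f ω) 0) P := hf.pos_part
  calc ENNReal.ofReal (∫ ω, f ω ∂P) ≤ ENNReal.ofReal (∫ ω, max (f ω) 0 ∂P) :=
        ENNReal.ofReal_le_ofReal (integral_mono hf hmax fun ω => le_max_left _ _)
    _ = ∫⁻ ω, ENNReal.ofReal (max (f ω) 0) ∂P :=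
        ofReal_integral_eq_lintegral_ofReal hmax (Eventually.of_forall fun ω => le_max_right _ _)
    _ = _ := by simp [ofReal_max_zero']

lemma entU_pos {mΩ : MeasurableSpace Ω} (P : Measure Ω) {l : ℝ} (hl : 0 < l) {X : Ω → ℝ}
    (h : ∫⁻ ω, ENNReal.ofReal (Real.exp (-l * X ω)) ∂P < 1) : 0 < entU P l X := by
  refine EReal.mul_pos ?_ ?_
  · have : ENNReal.log (∫⁻ ω, ENNReal.ofReal (Real.exp (-l * X ω)) ∂P) < 0 :=
      ENNReal.log_lt_zero_iff.mpr h
    rw [← neg_zero]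
    exact EReal.neg_lt_neg_iff.mpr this
  · exact_mod_cast EReal.coe_pos.mpr (by positivity)

lemma integral_pos_of_entU_pos {mΩ : MeasurableSpace Ω} (P : Measure Ω) [IsProbabilityMeasure P]
    {l : ℝ} (hl : 0 < l) {X : Ω → ℝ} (hX : Integrable X P)
    (h : 0 < entU P l X) : 0 < ∫ ω, X ω ∂P := by
  set I := ∫⁻ ω, ENNReal.ofReal (Real.exp (-l * X ω)) ∂P with hI
  have hI1 : I < 1 := by
    by_contra hc
    push_neg at hc
    have hlog : 0 ≤ ENNReal.log I := ENNReal.zero_le_log_iff.mpr hc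
    have hcoe : (0 : EReal) ≤ ((1 / l : ℝ) : EReal) := by
      exact_mod_cast EReal.coe_nonneg.mpr (by positivity)
    have : 0 ≤ ENNReal.log I * ((1 / l : ℝ) : EReal) := mul_nonneg hlog hcoe
    have h2 : entU P l X ≤ 0 := by
      unfold entU
      rw [← hI, EReal.neg_mul, ← neg_zero]
      exact EReal.neg_le_neg_iff.mpr this
    exact absurd h (not_lt.mpr h2)
  by_contra hEX
  push_neg at hEX
  have hint : Integrable (fun ω => 1 - l * X ω) P :=
    (integrable_const 1).sub (hX.const_mul l)
  have hle : ENNReal.ofReal (∫ ω, (1 - l * X ω) ∂P) ≤ I := by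
    refine (ofReal_integral_le P hint).trans (lintegral_mono fun ω => ?_)
    exact ENNReal.ofReal_le_ofReal (by nlinarith [Real.add_one_le_exp (-l * X ω)])
  have hval : ∫ ω, (1 - l * X ω) ∂P = 1 - l * ∫ ω, X ω ∂P := by
    rw [integral_sub (integrable_const 1) (hX.const_mul l), integral_const,
      integral_const_mul]
    simp
  rw [hval] at hle
  have h1 : (1 : ℝ≥0∞) ≤ ENNReal.ofReal (1 - l * ∫ ω, X ω ∂P) := by
    rw [show (1:ℝ≥0∞) = ENNReal.ofReal 1 by simp]
    exact ENNReal.ofReal_le_ofReal (by nlinarith)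
  exact absurd (h1.trans hle) (not_le.mpr hI1)

lemma exp_quad_bound {x : ℝ} (hx : |x| ≤ 1) : Real.exp x ≤ 1 + x + x ^ 2 := by
  have h := Real.exp_bound hx (n := 2) (by norm_num)
  have hsum : ∑ m ∈ Finset.range 2, x ^ m / m.factorial = 1 + x := by
    simp [Finset.sum_range_succ]
  rw [hsum] at h
  have h2 : Real.exp x - (1 + x) ≤ |x| ^ 2 * ((2:ℕ).succ / ((2:ℕ).factorial * 2)) :=
    (le_abs_self _).trans h
  have : |x| ^ 2 * ((2:ℕ).succ / ((2:ℕ).factorial * 2)) ≤ x ^ 2 := by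
    rw [sq_abs]
    norm_num
    nlinarith [sq_nonneg x]
  linarith

lemma exists_small_mu {mΩ : MeasurableSpace Ω} (P : Measure Ω) [IsProbabilityMeasure P]
    {X : Ω → ℝ} (hX : Integrable X P) {C : ℝ} (hC : 0 ≤ C)
    (hXC : ∀ᵐ ω ∂P, |X ω| ≤ C) (hEX : 0 < ∫ ω, X ω ∂P) :
    ∃ μ0 : ℝ, 0 < μ0 ∧ ∀ μ : ℝ, 0 < μ → μ ≤ μ0 →
      ∫⁻ ω, ENNReal.ofReal (Real.exp (-μ * X ω)) ∂P < 1 := by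
  set E := ∫ ω, X ω ∂P with hE
  refine ⟨min (1 / (C + 1)) (E / (2 * (C ^ 2 + 1))), lt_min (by positivity) (by positivity),
    fun μ hμ hμ0 => ?_⟩
  have hμ1 : μ * C ≤ 1 := by
    have h1 : μ ≤ 1 / (C + 1) := hμ0.trans (min_le_left _ _)
    rw [le_div_iff₀ (by positivity)] at h1
    nlinarith
  have hμ2 : μ * C ^ 2 ≤ E / 2 := by
    have h2 : μ ≤ E / (2 * (C ^ 2 + 1)) := hμ0.trans (min_le_right _ _)
    rw [le_div_iff₀ (by positivity)] at h2
    nlinarith [sq_nonneg C]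
  -- X^2 integrable
  have hX2 : Integrable (fun ω => X ω ^ 2) P := by
    refine Integrable.mono' (integrable_const (C ^ 2)) ?_ ?_
    · exact (hX.1.mul hX.1).congr (Eventually.of_forall fun ω => (sq (X ω)).symm)
    · filter_upwards [hXC] with ω hω
      rw [Real.norm_eq_abs, abs_pow]
      exact pow_le_pow_left₀ (abs_nonneg _) hω 2
  set f : Ω → ℝ := fun ω => 1 - μ * X ω + μ ^ 2 * X ω ^ 2 with hf
  have hfint : Integrable f P :=
    ((integrable_const 1).sub (hX.const_mul μ)).add (hX2.const_mul (μ ^ 2))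
  have hfnn : 0 ≤ᵐ[P] f := by
    filter_upwards [hXC] with ω hω
    simp only [Pi.zero_apply, hf]
    have : μ * X ω ≤ 1 := by
      calc μ * X ω ≤ μ * |X ω| := by
            exact mul_le_mul_of_nonneg_left (le_abs_self _) hμ.le
        _ ≤ μ * C := mul_le_mul_of_nonneg_left hω hμ.le
        _ ≤ 1 := hμ1
    nlinarith [sq_nonneg (μ * X ω), sq_nonneg (X ω)]
  have hstep : ∫⁻ ω, ENNReal.ofReal (Real.exp (-μ * X ω)) ∂P ≤ ENNReal.ofReal (∫ ω, f ω ∂P) := by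
    rw [ofReal_integral_eq_lintegral_ofReal hfint hfnn]
    refine lintegral_mono_ae ?_
    filter_upwards [hXC] with ω hω
    refine ENNReal.ofReal_le_ofReal ?_
    have habs : |(-μ * X ω)| ≤ 1 := by
      rw [abs_mul, abs_neg, abs_of_pos hμ]
      calc μ * |X ω| ≤ μ * C := mul_le_mul_of_nonneg_left hω hμ.le
        _ ≤ 1 := hμ1
    have := exp_quad_bound habs
    calc Real.exp (-μ * X ω) ≤ 1 + (-μ * X ω) + (-μ * X ω) ^ 2 := this
      _ = f ω := by rw [hf]; ring
  have hfval : ∫ ω, f ω ∂P ≤ 1 - μ * E + μ ^ 2 * C ^ 2 := by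
    have e1 : ∫ ω, (1 - μ * X ω + μ ^ 2 * X ω ^ 2) ∂P
        = (∫ ω, (1 - μ * X ω) ∂P) + ∫ ω, μ ^ 2 * X ω ^ 2 ∂P :=
      integral_add ((integrable_const 1).sub (hX.const_mul μ)) (hX2.const_mul (μ ^ 2))
    have e2 : ∫ ω, (1 - μ * X ω) ∂P = 1 - μ * E := by
      rw [integral_sub (integrable_const 1) (hX.const_mul μ), integral_const, integral_const_mul]
      simp [hE]
    have e3 : ∫ ω, μ ^ 2 * X ω ^ 2 ∂P = μ ^ 2 * ∫ ω, X ω ^ 2 ∂P := integral_const_mul _ _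
    have hint2 : ∫ ω, f ω ∂P = 1 - μ * E + μ ^ 2 * ∫ ω, X ω ^ 2 ∂P := by
      rw [hf] at *
      rw [e1, e2, e3]
    rw [hint2]
    have : ∫ ω, X ω ^ 2 ∂P ≤ C ^ 2 := by
      calc ∫ ω, X ω ^ 2 ∂P ≤ ∫ _ω, C ^ 2 ∂P := by
            refine integral_mono_ae hX2 (integrable_const _) ?_
            filter_upwards [hXC] with ω hω
            rw [← sq_abs]
            exact pow_le_pow_left₀ (abs_nonneg _) hω 2
        _ = C ^ 2 := by simp
    nlinarith [sq_nonneg μ]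
  refine lt_of_le_of_lt hstep ?_
  refine lt_of_le_of_lt (ENNReal.ofReal_le_ofReal hfval) ?_
  rw [show (1:ℝ≥0∞) = ENNReal.ofReal 1 by simp]
  refine (ENNReal.ofReal_lt_ofReal_iff (by norm_num)).mpr ?_
  nlinarith [hμ2, hμ, mul_le_mul_of_nonneg_left hμ2 hμ.le]

lemma max_mul_zero {c x : ℝ} (hc : 0 ≤ c) : max (c * x) 0 = c * max x 0 := by
  rcases le_total x 0 with h | h
  · rw [max_eq_right h, max_eq_right (by nlinarith), mul_zero]
  · rw [max_eq_left h, max_eq_left (by positivity)]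

lemma propGain_smul (m n : ℕ) (Hmid HT γp γm : ℕ → Ω → Fin n → ℝ)
    (a : ℕ → Ω → Fin n → ℝ) {c : ℝ} (hc : 0 ≤ c) (ω : Ω) :
    propGain m n Hmid HT γp γm (fun t ω i => c * a t ω i) ω
      = c * propGain m n Hmid HT γp γm a ω := by
  unfold propGain
  rw [Finset.mul_sum]
  refine Finset.sum_congr rfl fun t _ => ?_
  rw [mul_sub, Finset.mul_sum, Finset.mul_sum]
  congr 1
  · exact Finset.sum_congr rfl fun i _ => by ring
  · refine Finset.sum_congr rfl fun i _ => ?_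
    rw [show -(c * a t ω i) = c * (-(a t ω i)) by ring, max_mul_zero hc, max_mul_zero hc]
    ring

lemma IsPolicy.smul {mΩ : MeasurableSpace Ω} {P : Measure Ω} {m n : ℕ}
    {F : ℕ → MeasurableSpace Ω} {a : ℕ → Ω → Fin n → ℝ}
    (ha : IsPolicy P m n F a) (c : ℝ) :
    IsPolicy P m n F (fun t ω i => c * a t ω i) := by
  intro t ht
  obtain ⟨hmeas, C, hC⟩ := ha t ht
  refine ⟨?_, |c| * C, ?_⟩
  · exact (measurable_pi_lambda (fun v : Fin n → ℝ => fun i => c * v i)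
      fun i => by fun_prop).comp hmeas
  · filter_upwards [hC] with ω hω i
    rw [abs_mul]
    exact mul_le_mul_of_nonneg_left (hω i) (abs_nonneg c)

lemma exists_truncated {mΩ : MeasurableSpace Ω} (P : Measure Ω) [IsProbabilityMeasure P]
    (m n : ℕ) (F : ℕ → MeasurableSpace Ω) (hF_le : ∀ t, F t ≤ mΩ)
    (Hmid HT : ℕ → Ω → Fin n → ℝ)
    (hHmid_bdd : ∀ t < m, ∃ C : ℝ, ∀ᵐ ω ∂P, ∀ i, |Hmid t ω i| ≤ C)
    (hHT_bdd : ∀ t < m, ∃ C : ℝ, ∀ᵐ ω ∂P, ∀ i, |HT t ω i| ≤ C)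
    (γp γm : ℕ → Ω → Fin n → ℝ)
    (hγp_meas : ∀ t < m, Measurable[F t] (γp t)) (hγm_meas : ∀ t < m, Measurable[F t] (γm t))
    (hγp_nonneg : ∀ t ω i, 0 ≤ γp t ω i) (hγm_nonneg : ∀ t ω i, 0 ≤ γm t ω i)
    (hInt : ∀ a, IsPolicy P m n F a → Integrable (propGain m n Hmid HT γp γm a) P)
    {a : ℕ → Ω → Fin n → ℝ} (ha : IsPolicy P m n F a)
    (hpos : 0 < ∫ ω, propGain m n Hmid HT γp γm a ω ∂P) :
    ∃ b : ℕ → Ω → Fin n → ℝ, IsPolicy P m n F b ∧ ∃ C : ℝ, 0 ≤ C ∧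
      (∀ᵐ ω ∂P, |propGain m n Hmid HT γp γm b ω| ≤ C) ∧
      0 < ∫ ω, propGain m n Hmid HT γp γm b ω ∂P := by
  classical
  -- combined a.e. bounds
  have hbnd : ∀ t, ∃ C : ℝ, 0 ≤ C ∧ (t < m →
      ∀ᵐ ω ∂P, ∀ i, |a t ω i| ≤ C ∧ |HT t ω i| ≤ C ∧ |Hmid t ω i| ≤ C) := by
    intro t
    by_cases ht : t < m
    · obtain ⟨C1, hC1⟩ := (ha t ht).2
      obtain ⟨C2, hC2⟩ := hHT_bdd t ht
      obtain ⟨C3, hC3⟩ := hHmid_bdd t ht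
      refine ⟨max (max C1 C2) (max C3 0), le_max_of_le_right (le_max_right _ _), fun _ => ?_⟩
      filter_upwards [hC1, hC2, hC3] with ω h1 h2 h3 i
      exact ⟨(h1 i).trans (le_max_of_le_left (le_max_left _ _)),
        (h2 i).trans (le_max_of_le_left (le_max_right _ _)),
        (h3 i).trans (le_max_of_le_right (le_max_left _ _))⟩
    · exact ⟨0, le_refl 0, fun h => absurd h ht⟩
  choose D hD0 hD using hbnd
  set B : ℕ → ℝ := fun t => (n : ℝ) * (2 * D t ^ 2) with hB
  have hB0 : ∀ t, 0 ≤ B t := fun t => by positivity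
  set gsum : ℕ → Ω → ℝ := fun t ω => ∑ i, (γp t ω i + γm t ω i) with hgsum
  have hgs_meas : ∀ t < m, Measurable[F t] (gsum t) := by
    intro t ht
    have h1 : Measurable fun p : (Fin n → ℝ) × (Fin n → ℝ) => ∑ i, (p.1 i + p.2 i) :=
      Finset.measurable_sum _ fun i _ =>
        ((measurable_pi_apply i).comp measurable_fst).add
          ((measurable_pi_apply i).comp measurable_snd)
    exact h1.comp (Measurable.prodMk (hγp_meas t ht) (hγm_meas t ht))
  set S : ℕ → ℕ → Set Ω := fun t K => {ω | (K : ℝ) < gsum t ω} with hS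
  have hS_meas : ∀ t < m, ∀ K, MeasurableSet (S t K) := by
    intro t ht K
    exact hF_le t _ (measurableSet_lt measurable_const (hgs_meas t ht))
  -- measures of S t K tend to 0
  have hS_tendsto : ∀ t < m, Tendsto (fun K : ℕ => (P (S t K)).toReal) atTop (𝓝 0) := by
    intro t ht
    have hanti : Antitone (S t) := by
      intro K K' hKK' ω hω
      exact lt_of_le_of_lt ((Nat.cast_le (α := ℝ)).mpr hKK') hω
    have hempty : ⋂ K, S t K = ∅ := by
      refine eq_empty_iff_forall_notMem.mpr fun ω hω => ?_
      obtain ⟨K, hK⟩ := exists_nat_gt (gsum t ω)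
      exact absurd (mem_iInter.mp hω K) (not_lt.mpr hK.le)
    have h1 : Tendsto (fun K : ℕ => P (S t K)) atTop (𝓝 (P (⋂ K : ℕ, S t K))) :=
      tendsto_measure_iInter_atTop (ι := ℕ) (μ := P) (s := S t)
        (fun K => (hS_meas t ht K).nullMeasurableSet) hanti ⟨0, measure_ne_top P _⟩
    rw [hempty, measure_empty] at h1
    have := (ENNReal.tendsto_toReal ENNReal.zero_ne_top).comp h1
    exact this
  set ε := ∫ ω, propGain m n Hmid HT γp γm a ω ∂P with hε
  -- choose K
  have hsum_tendsto : Tendsto (fun K : ℕ => ∑ t ∈ Finset.range m, B t * (P (S t K)).toReal)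
      atTop (𝓝 0) := by
    have : Tendsto (fun K : ℕ => ∑ t ∈ Finset.range m, B t * (P (S t K)).toReal) atTop
        (𝓝 (∑ t ∈ Finset.range m, B t * 0)) := by
      refine tendsto_finset_sum _ fun t ht => ?_
      exact (hS_tendsto t (Finset.mem_range.mp ht)).const_mul (B t)
    simpa using this
  obtain ⟨K, hK⟩ : ∃ K : ℕ, ∑ t ∈ Finset.range m, B t * (P (S t K)).toReal < ε := by
    have := hsum_tendsto.eventually_lt_const hpos
    exact this.exists
  -- the truncated policy
  set b : ℕ → Ω → Fin n → ℝ := fun t ω => if gsum t ω ≤ (K : ℝ) then a t ω else 0 with hb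
  have hb_pol : IsPolicy P m n F b := by
    intro t ht
    obtain ⟨hmeas, C, hC⟩ := ha t ht
    constructor
    · have h1 : Measurable fun p : ℝ × (Fin n → ℝ) =>
          if p.1 ≤ (K : ℝ) then p.2 else (0 : Fin n → ℝ) :=
        Measurable.ite (measurableSet_le measurable_fst measurable_const)
          measurable_snd measurable_const
      exact h1.comp (Measurable.prodMk (hgs_meas t ht) hmeas)
    · refine ⟨max C 0, ?_⟩
      filter_upwards [hC] with ω hω i
      by_cases h : gsum t ω ≤ (K : ℝ)
      · simp only [hb, if_pos h]
        exact (hω i).trans (le_max_left _ _)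
      · simp only [hb, if_neg h, Pi.zero_apply, abs_zero]
        exact le_max_right _ _
  -- pointwise form of propGain b
  have hbform : ∀ ω, propGain m n Hmid HT γp γm b ω = ∑ t ∈ Finset.range m,
      (if gsum t ω ≤ (K : ℝ) then ((∑ i, a t ω i * (HT t ω i - Hmid t ω i))
        - ∑ i, (γp t ω i * max (a t ω i) 0 + γm t ω i * max (-a t ω i) 0)) else 0) := by
    intro ω
    unfold propGain
    refine Finset.sum_congr rfl fun t _ => ?_
    by_cases h : gsum t ω ≤ (K : ℝ) <;> simp [hb, h]
  -- a.e. combined bound statement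
  have hae : ∀ᵐ ω ∂P, ∀ t, t < m →
      ∀ i, |a t ω i| ≤ D t ∧ |HT t ω i| ≤ D t ∧ |Hmid t ω i| ≤ D t := by
    rw [ae_all_iff]
    intro t
    by_cases ht : t < m
    · filter_upwards [hD t ht] with ω hω
      exact fun _ => hω
    · exact Eventually.of_forall fun ω h => absurd h ht
  -- deterministic per-t facts under the bounds
  have hkey : ∀ ω, (∀ t, t < m →
        ∀ i, |a t ω i| ≤ D t ∧ |HT t ω i| ≤ D t ∧ |Hmid t ω i| ≤ D t) →
      ∀ t ∈ Finset.range m,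
        |(∑ i, a t ω i * (HT t ω i - Hmid t ω i))| ≤ B t ∧
        0 ≤ (∑ i, (γp t ω i * max (a t ω i) 0 + γm t ω i * max (-a t ω i) 0)) ∧
        (∑ i, (γp t ω i * max (a t ω i) 0 + γm t ω i * max (-a t ω i) 0)) ≤ D t * gsum t ω := by
    intro ω hω t htr
    have ht := Finset.mem_range.mp htr
    have hωt := hω t ht
    refine ⟨?_, ?_, ?_⟩
    · calc |(∑ i, a t ω i * (HT t ω i - Hmid t ω i))|
          ≤ ∑ i, |a t ω i * (HT t ω i - Hmid t ω i)| := Finset.abs_sum_le_sum_abs _ _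
        _ ≤ ∑ _i : Fin n, D t * (2 * D t) := by
            refine Finset.sum_le_sum fun i _ => ?_
            rw [abs_mul]
            refine mul_le_mul (hωt i).1 ?_ (abs_nonneg _) (hD0 t)
            calc |HT t ω i - Hmid t ω i| ≤ |HT t ω i| + |Hmid t ω i| := abs_sub _ _
              _ ≤ 2 * D t := by nlinarith [(hωt i).2.1, (hωt i).2.2]
        _ = B t := by
            simp only [Finset.sum_const, Finset.card_univ, Fintype.card_fin, nsmul_eq_mul, hB]
            ring
    · refine Finset.sum_nonneg fun i _ => ?_
      have := hγp_nonneg t ω i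
      have := hγm_nonneg t ω i
      positivity
    · rw [hgsum, Finset.mul_sum]
      refine Finset.sum_le_sum fun i _ => ?_
      have h1 : max (a t ω i) 0 ≤ D t := max_le ((le_abs_self _).trans (hωt i).1) (hD0 t)
      have h2 : max (-a t ω i) 0 ≤ D t :=
        max_le ((neg_le_abs _).trans (hωt i).1) (hD0 t)
      have h3 : 0 ≤ max (a t ω i) 0 := le_max_right _ _
      have h4 : 0 ≤ max (-a t ω i) 0 := le_max_right _ _
      have h5 := hγp_nonneg t ω i
      have h6 := hγm_nonneg t ω i
      nlinarith
  -- a.e. bound on |propGain b|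
  refine ⟨b, hb_pol, ∑ t ∈ Finset.range m, (B t + D t * K), ?_, ?_, ?_⟩
  · exact Finset.sum_nonneg fun t _ => by
      have := hB0 t; have := hD0 t; positivity
  · filter_upwards [hae] with ω hω
    rw [hbform ω]
    calc |∑ t ∈ Finset.range m, _| ≤ ∑ t ∈ Finset.range m,
          |(if gsum t ω ≤ (K : ℝ) then ((∑ i, a t ω i * (HT t ω i - Hmid t ω i))
            - ∑ i, (γp t ω i * max (a t ω i) 0 + γm t ω i * max (-a t ω i) 0)) else 0)| :=
        Finset.abs_sum_le_sum_abs _ _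
      _ ≤ ∑ t ∈ Finset.range m, (B t + D t * K) := by
        refine Finset.sum_le_sum fun t htr => ?_
        obtain ⟨h1, h2, h3⟩ := hkey ω hω t htr
        by_cases h : gsum t ω ≤ (K : ℝ)
        · rw [if_pos h]
          have h4 : D t * gsum t ω ≤ D t * K := mul_le_mul_of_nonneg_left h (hD0 t)
          calc |_ - _| ≤ |(∑ i, a t ω i * (HT t ω i - Hmid t ω i))|
                + |(∑ i, (γp t ω i * max (a t ω i) 0 + γm t ω i * max (-a t ω i) 0))| :=
              abs_sub _ _
            _ ≤ B t + D t * K := by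
              rw [abs_of_nonneg h2]
              exact add_le_add h1 (h3.trans h4)
        · rw [if_neg h, abs_zero]
          have := hB0 t; have := hD0 t
          positivity
  · -- integral positivity
    have hGa := hInt a ha
    have hGb := hInt b hb_pol
    have hdiff : ∫ ω, (propGain m n Hmid HT γp γm a ω - propGain m n Hmid HT γp γm b ω) ∂P
        ≤ ∑ t ∈ Finset.range m, B t * (P (S t K)).toReal := by
      have hrhs_int : Integrable
          (fun ω => ∑ t ∈ Finset.range m, (S t K).indicator (fun _ => B t) ω) P := by
        refine integrable_finset_sum _ fun t htr => ?_
        exact (integrable_const (B t)).indicator (hS_meas t (Finset.mem_range.mp htr) K)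
      calc ∫ ω, (propGain m n Hmid HT γp γm a ω - propGain m n Hmid HT γp γm b ω) ∂P
          ≤ ∫ ω, (∑ t ∈ Finset.range m, (S t K).indicator (fun _ => B t) ω) ∂P := by
            refine integral_mono_ae (hGa.sub hGb) hrhs_int ?_
            filter_upwards [hae] with ω hω
            rw [hbform ω]
            unfold propGain
            rw [← Finset.sum_sub_distrib]
            refine Finset.sum_le_sum fun t htr => ?_
            obtain ⟨h1, h2, h3⟩ := hkey ω hω t htr
            by_cases h : gsum t ω ≤ (K : ℝ)
            · rw [if_pos h, sub_self]
              have : ω ∉ S t K := by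
                simp only [hS, mem_setOf_eq, not_lt]
                exact h
              rw [indicator_of_notMem this]
            · rw [if_neg h, sub_zero]
              have hmem : ω ∈ S t K := by
                simp only [hS, mem_setOf_eq]
                exact not_le.mp h
              rw [indicator_of_mem hmem]
              have := (abs_le.mp (le_refl |(∑ i, a t ω i * (HT t ω i - Hmid t ω i))|))
              calc _ ≤ (∑ i, a t ω i * (HT t ω i - Hmid t ω i)) := by linarith
                _ ≤ |(∑ i, a t ω i * (HT t ω i - Hmid t ω i))| := le_abs_self _
                _ ≤ B t := h1
        _ = ∑ t ∈ Finset.range m, B t * (P (S t K)).toReal := by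
            rw [integral_finset_sum _ fun t htr =>
              (integrable_const (B t)).indicator (hS_meas t (Finset.mem_range.mp htr) K)]
            refine Finset.sum_congr rfl fun t htr => ?_
            rw [integral_indicator_const _ (hS_meas t (Finset.mem_range.mp htr) K)]
            rw [smul_eq_mul, mul_comm]
            rfl
    rw [integral_sub hGa hGb] at hdiff
    linarith

/-- With proportional transaction costs, if `g_λ > 0` for some
`λ ∈ [0,∞)` then `g_λ > 0` for every `λ ∈ [0,∞)` (where `U_0 = E`). -/
theorem stmt_3
    {mΩ : MeasurableSpace Ω} (P : Measure Ω) [IsProbabilityMeasure P]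
    (m n : ℕ) (F : ℕ → MeasurableSpace Ω) (hF_mono : Monotone F) (hF_le : ∀ t, F t ≤ mΩ)
    (Hmid HT : ℕ → Ω → Fin n → ℝ)
    (hHmid_meas : ∀ t < m, Measurable[F t] (Hmid t))
    (hHT_meas : ∀ t < m, Measurable[F m] (HT t))
    (hHmid_bdd : ∀ t < m, ∃ C : ℝ, ∀ᵐ ω ∂P, ∀ i, |Hmid t ω i| ≤ C)
    (hHT_bdd : ∀ t < m, ∃ C : ℝ, ∀ᵐ ω ∂P, ∀ i, |HT t ω i| ≤ C)
    (γp γm : ℕ → Ω → Fin n → ℝ)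
    (hγp_meas : ∀ t < m, Measurable[F t] (γp t)) (hγm_meas : ∀ t < m, Measurable[F t] (γm t))
    (hγp_nonneg : ∀ t ω i, 0 ≤ γp t ω i) (hγm_nonneg : ∀ t ω i, 0 ≤ γm t ω i)
    (hInt : ∀ a, IsPolicy P m n F a → Integrable (propGain m n Hmid HT γp γm a) P) :
    let g : ℝ → EReal := fun l =>
      ⨆ a : {a : ℕ → Ω → Fin n → ℝ // IsPolicy P m n F a},
        if l = 0 then ((∫ ω, propGain m n Hmid HT γp γm a.1 ω ∂P : ℝ) : EReal)
        else entU P l (propGain m n Hmid HT γp γm a.1)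
    (∃ l : ℝ, 0 ≤ l ∧ 0 < g l) → ∀ l : ℝ, 0 ≤ l → 0 < g l := by
  intro g
  rintro ⟨l0, hl0, hgl0⟩ l hl
  have hstep1 : ∃ a : ℕ → Ω → Fin n → ℝ, IsPolicy P m n F a ∧
      0 < ∫ ω, propGain m n Hmid HT γp γm a ω ∂P := by
    rw [lt_iSup_iff] at hgl0
    obtain ⟨⟨a, hap⟩, hga⟩ := hgl0
    by_cases h0 : l0 = 0
    · rw [if_pos h0] at hga
      exact ⟨a, hap, by exact_mod_cast hga⟩
    · rw [if_neg h0] at hga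
      have hl0' : 0 < l0 := lt_of_le_of_ne hl0 (Ne.symm h0)
      exact ⟨a, hap, integral_pos_of_entU_pos P hl0' (hInt a hap) hga⟩
  obtain ⟨a, hap, hEa⟩ := hstep1
  obtain ⟨b, hbp, C, hC0, hbC, hEb⟩ := exists_truncated P m n F hF_le Hmid HT hHmid_bdd
    hHT_bdd γp γm hγp_meas hγm_meas hγp_nonneg hγm_nonneg hInt hap hEa
  by_cases hl0' : l = 0
  · refine lt_of_lt_of_le ?_ (le_iSup _ ⟨b, hbp⟩)
    rw [if_pos hl0']
    exact_mod_cast hEb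
  · have hlpos : 0 < l := lt_of_le_of_ne hl (Ne.symm hl0')
    obtain ⟨μ0, hμ0, hμ⟩ := exists_small_mu P (hInt b hbp) hC0 hbC hEb
    set μ := min μ0 l with hμdef
    have hμpos : 0 < μ := lt_min hμ0 hlpos
    set c := μ / l with hc
    have hcpos : 0 < c := div_pos hμpos hlpos
    set b' : ℕ → Ω → Fin n → ℝ := fun t ω i => c * b t ω i with hb'
    have hb'p : IsPolicy P m n F b' := hbp.smul c
    refine lt_of_lt_of_le ?_ (le_iSup _ ⟨b', hb'p⟩)
    rw [if_neg hl0']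
    refine entU_pos P hlpos ?_
    have hexp : ∀ ω, -l * propGain m n Hmid HT γp γm b' ω
        = -μ * propGain m n Hmid HT γp γm b ω := by
      intro ω
      rw [hb', propGain_smul m n Hmid HT γp γm b hcpos.le ω, hc]
      field_simp
    calc ∫⁻ ω, ENNReal.ofReal (Real.exp (-l * propGain m n Hmid HT γp γm b' ω)) ∂P
        = ∫⁻ ω, ENNReal.ofReal (Real.exp (-μ * propGain m n Hmid HT γp γm b ω)) ∂P :=
          lintegral_congr fun ω => by rw [hexp ω]
      _ < 1 := hμ μ hμpos (min_le_left _ _)
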